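/- arXiv:1301.3942 — 4 statements merged into one kernel-verified Lean document; each statement's English description precedes it below -/
import Mathlib

section
/- If a lattice gauge field with values in a group G has trivial plaquette holonomy (f(p) = 1 for every plaquette p), then the Wilson loop around any closed loop that bounds a connected sub-lattice 𝔻 (i.e., is homologically trivial) is the identity element. -/
/-!  Lattice gauge theory set-up on the 2-d square lattice; see the paper.

A path is a list of steps `(μ, b)`: from the current vertex `x`, if `b = true`
move to `x + e μ` picking up the link variable `U μ x`; if `b = false` move to
`x - e μ` picking up `(U μ (x - e μ))⁻¹`. -/

/-- Endpoint of a path starting at `x`. -/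
def pathEnd {Vt : Type*} [AddGroup Vt] (e : Fin 2 → Vt) (x : Vt) :
    List (Fin 2 × Bool) → Vt
  | [] => x
  | (μ, b) :: γ => pathEnd e (if b then x + e μ else x - e μ) γ

/-- The Wilson line of the gauge field `U` along a path starting at `x`. -/
def wline {G Vt : Type*} [Group G] [AddGroup Vt] (e : Fin 2 → Vt)
    (U : Fin 2 → Vt → G) (x : Vt) : List (Fin 2 × Bool) → G
  | [] => 1
  | (μ, b) :: γ =>
      if b then wline e U (x + e μ) γ * U μ x
      else wline e U (x - e μ) γ * (U μ (x - e μ))⁻¹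

/-- The plaquette holonomy (field strength) based at the vertex `x`. -/
def plaq {G Vt : Type*} [Group G] [AddGroup Vt] (e : Fin 2 → Vt)
    (U : Fin 2 → Vt → G) (x : Vt) : G :=
  (U 1 x)⁻¹ * (U 0 (x + e 1))⁻¹ * U 1 (x + e 0) * U 0 x

def nprodA {G : Type*} [Group G] (a : ℤ → G) : ℕ → G
  | 0 => 1
  | n+1 => a n * nprodA a n

def nprodB {G : Type*} [Group G] (a : ℤ → G) : ℕ → G
  | 0 => 1
  | n+1 => nprodB a n * a (-(n:ℤ)-1)

def zprod {G : Type*} [Group G] (a : ℤ → G) : ℤ → G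
  | Int.ofNat n => nprodA a n
  | Int.negSucc n => (nprodB a (n+1))⁻¹

lemma zprod_succ {G : Type*} [Group G] (a : ℤ → G) (n : ℤ) :
    zprod a (n + 1) = a n * zprod a n := by
  cases n with
  | ofNat k =>
      have : (Int.ofNat k) + 1 = Int.ofNat (k+1) := rfl
      rw [this]
      simp [zprod, nprodA]
  | negSucc k =>
      cases k with
      | zero =>
          have : (Int.negSucc 0) + 1 = Int.ofNat 0 := rfl
          rw [this]
          simp [zprod, nprodA, nprodB]
      | succ j =>
          have : (Int.negSucc (j+1)) + 1 = Int.negSucc j := rfl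
          rw [this]
          have h2 : (Int.negSucc (j+1)) = -(j:ℤ) - 2 := by
            simp [Int.negSucc_eq]; ring
          simp only [zprod, nprodB, h2]
          have h3 : (-(↑(j+1):ℤ) - 1) = -(j:ℤ) - 2 := by push_cast; ring
          rw [h3]
          simp [mul_inv_rev, mul_assoc]

lemma zprod_zero {G : Type*} [Group G] (a : ℤ → G) : zprod a 0 = 1 := rfl

lemma zprod_negstep {G : Type*} [Group G] (a : ℤ → G) (n : ℤ) :
    zprod a (n - 1) = (a (n-1))⁻¹ * zprod a n := by
  have h := zprod_succ a (n - 1)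
  rw [show n - 1 + 1 = n by ring] at h
  rw [h, inv_mul_cancel_left]

lemma conj_step {G : Type*} [Group G] {a1 a2 z1 z2 u t : G}
    (h : z1 * u * z2⁻¹ = a1 * t * a2⁻¹) :
    a1⁻¹ * z1 * u * (a2⁻¹ * z2)⁻¹ = t := by
  calc a1⁻¹ * z1 * u * (a2⁻¹ * z2)⁻¹
      = a1⁻¹ * (z1 * u * z2⁻¹) * a2 := by group
    _ = a1⁻¹ * (a1 * t * a2⁻¹) * a2 := by rw [h]
    _ = t := by group


/-- If a lattice gauge field on the 2-d square lattice `ℤ²` has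
trivial plaquette holonomy everywhere, then the Wilson loop around any
(homologically trivial) closed loop is the identity. -/
theorem wilson_loop_trivial_of_flat {G : Type*} [Group G]
    (e : Fin 2 → ℤ × ℤ) (he : e = ![(1, 0), (0, 1)])
    (U : Fin 2 → ℤ × ℤ → G)
    (hflat : ∀ p : ℤ × ℤ, plaq e U p = 1)
    (x : ℤ × ℤ) (γ : List (Fin 2 × Bool)) (hclosed : pathEnd e x γ = x) :
    wline e U x γ = 1 := by
  have he0 : e 0 = (1, 0) := by rw [he]; rfl
  have he1 : e 1 = (0, 1) := by rw [he]; rfl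
  -- rearranged flatness
  have hrel : ∀ m n : ℤ, U 0 (m, n+1) = U 1 (m+1, n) * U 0 (m, n) * (U 1 (m, n))⁻¹ := by
    intro m n
    have h := hflat (m, n)
    simp only [plaq, he0, he1, Prod.mk_add_mk, add_zero, zero_add] at h
    rw [mul_assoc, mul_assoc, inv_mul_eq_one] at h
    rw [h]; group
  have key0 : ∀ m n : ℤ,
      zprod (fun k => U 1 (m+1, k)) n * U 0 (m, 0) * (zprod (fun k => U 1 (m, k)) n)⁻¹
        = U 0 (m, n) := by
    intro m n
    induction n using Int.induction_on with
    | zero => simp [zprod_zero]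
    | succ k ih =>
        rw [zprod_succ, zprod_succ, hrel m k, ← ih]; group
    | pred k ih =>
        have h1 := zprod_negstep (fun k => U 1 (m+1, k)) (-(k:ℤ))
        have h2 := zprod_negstep (fun k => U 1 (m, k)) (-(k:ℤ))
        rw [h1, h2]
        have hrelm := hrel m (-(k:ℤ) - 1)
        rw [show -(k:ℤ) - 1 + 1 = -(k:ℤ) by ring] at hrelm
        exact conj_step (ih.trans hrelm)
  set V : ℤ × ℤ → G :=
    fun p => zprod (fun k => U 1 (p.1, k)) p.2 * zprod (fun k => U 0 (k, 0)) p.1 with hV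
  have Ustep : ∀ (μ : Fin 2) (y : ℤ × ℤ), U μ y = V (y + e μ) * (V y)⁻¹ := by
    intro μ y
    obtain ⟨m, n⟩ := y
    fin_cases μ
    · show U 0 (m,n) = V ((m,n) + e 0) * (V (m,n))⁻¹
      rw [he0, show ((m,n) : ℤ×ℤ) + (1,0) = (m+1, n) by simp [Prod.mk_add_mk]]
      simp only [hV]
      rw [← key0 m n, zprod_succ (fun k => U 0 (k, 0)) m]
      group
    · show U 1 (m,n) = V ((m,n) + e 1) * (V (m,n))⁻¹
      rw [he1, show ((m,n) : ℤ×ℤ) + (0,1) = (m, n+1) by simp [Prod.mk_add_mk]]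
      simp only [hV]
      rw [zprod_succ (fun k => U 1 (m, k)) n]
      group
  have main : ∀ (γ : List (Fin 2 × Bool)) (y : ℤ × ℤ),
      wline e U y γ = V (pathEnd e y γ) * (V y)⁻¹ := by
    intro γ
    induction γ with
    | nil => intro y; simp [wline, pathEnd]
    | cons s γ ih =>
        intro y
        obtain ⟨μ, b⟩ := s
        cases b
        · simp only [wline, pathEnd, if_neg, Bool.false_eq_true, if_false]
          rw [ih, Ustep μ (y - e μ), sub_add_cancel]
          group
        · simp only [wline, pathEnd, if_true]
          rw [ih, Ustep μ y]
          group
  rw [main γ x, hclosed]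
  simp
end

section
/- On an N×N periodic square lattice, if the gauge field has trivial plaquette holonomy in every plaquette, then two Wilson lines that start at the same base point and cross the lattice once in the same homology class (along possibly different paths) are equal as group elements. -/
/-- Signed winding number of a path in the direction `μ`. -/
def wind (μ : Fin 2) (γ : List (Fin 2 × Bool)) : ℤ :=
  (γ.count (μ, true) : ℤ) - (γ.count (μ, false) : ℤ)

/-! ### Auxiliary material -/

section Aux

variable {G : Type*} [Group G]

/-- Ordered product `f (n-1) * ⋯ * f 1 * f 0`. -/
def upProd (f : ℤ → G) : ℕ → G
  | 0 => 1
  | n + 1 => f n * upProd f n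

/-- Ordered product `(f (-(n)))⁻¹ * ⋯ * (f (-1))⁻¹`, inverse-ordered. -/
def downProd (f : ℤ → G) : ℕ → G
  | 0 => 1
  | n + 1 => (f (-(n + 1 : ℕ)))⁻¹ * downProd f n

/-- Ordered product of `f` from `0` to `n` (signed). -/
def lineProd (f : ℤ → G) : ℤ → G
  | .ofNat n => upProd f n
  | .negSucc n => downProd f (n + 1)

lemma lineProd_succ (f : ℤ → G) (n : ℤ) : lineProd f (n + 1) = f n * lineProd f n := by
  cases n with
  | ofNat k =>
      show lineProd f ((k : ℤ) + 1) = _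
      rw [show ((k : ℤ) + 1) = ((k + 1 : ℕ) : ℤ) by push_cast; ring]
      rfl
  | negSucc k =>
      cases k with
      | zero =>
          show lineProd f 0 = f (-1) * lineProd f (-1)
          show (1 : G) = f (-1) * downProd f 1
          simp [downProd]
      | succ m =>
          show lineProd f (Int.negSucc (m + 1) + 1) = _
          rw [show (Int.negSucc (m + 1) + 1) = Int.negSucc m by simp only [Int.negSucc_eq]; omega]
          show downProd f (m + 1) = f (Int.negSucc (m + 1)) * downProd f (m + 2)
          rw [show (Int.negSucc (m + 1)) = -((m + 2 : ℕ) : ℤ) by simp only [Int.negSucc_eq]; omega]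
          show downProd f (m + 1)
            = f (-((m + 2 : ℕ) : ℤ)) * ((f (-(m + 2 : ℕ)))⁻¹ * downProd f (m + 1))
          group

lemma lineProd_pred (f : ℤ → G) (n : ℤ) :
    lineProd f (n - 1) = (f (n - 1))⁻¹ * lineProd f n := by
  have := lineProd_succ f (n - 1)
  rw [sub_add_cancel] at this
  rw [this]; group

lemma lineProd_zero (f : ℤ → G) : lineProd f 0 = 1 := rfl

/-- The gauge potential on `ℤ × ℤ`: transport from the origin along the
standard path (first horizontally along row `0`, then vertically). -/
def gpot (U : Fin 2 → ℤ × ℤ → G) (z : ℤ × ℤ) : G :=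
  lineProd (fun k => U 1 (z.1, k)) z.2 * lineProd (fun k => U 0 (k, 0)) z.1

section Gpot

variable (U : Fin 2 → ℤ × ℤ → G)
  (hf : ∀ m n : ℤ, U 0 (m, n + 1) = U 1 (m + 1, n) * U 0 (m, n) * (U 1 (m, n))⁻¹)

include hf in
lemma key_col (m : ℤ) : ∀ n : ℤ,
    U 0 (m, n) * lineProd (fun k => U 1 (m, k)) n
      = lineProd (fun k => U 1 (m + 1, k)) n * U 0 (m, 0) := by
  intro n
  induction n using Int.induction_on with
  | zero => simp [lineProd_zero]
  | succ i ih =>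
      rw [lineProd_succ, lineProd_succ, hf m i]
      calc U 1 (m + 1, (i:ℤ)) * U 0 (m, (i:ℤ)) * (U 1 (m, (i:ℤ)))⁻¹ *
            (U 1 (m, (i:ℤ)) * lineProd (fun k => U 1 (m, k)) (i:ℤ))
          = U 1 (m + 1, (i:ℤ)) *
            (U 0 (m, (i:ℤ)) * lineProd (fun k => U 1 (m, k)) (i:ℤ)) := by group
        _ = U 1 (m + 1, (i:ℤ)) *
            (lineProd (fun k => U 1 (m + 1, k)) (i:ℤ) * U 0 (m, 0)) := by rw [ih]
        _ = _ := by group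
  | pred i ih =>
      have h1 : lineProd (fun k => U 1 (m, k)) (-(i:ℤ) - 1)
          = (U 1 (m, -(i:ℤ) - 1))⁻¹ * lineProd (fun k => U 1 (m, k)) (-(i:ℤ)) :=
        lineProd_pred _ _
      have h2 : lineProd (fun k => U 1 (m + 1, k)) (-(i:ℤ) - 1)
          = (U 1 (m + 1, -(i:ℤ) - 1))⁻¹ * lineProd (fun k => U 1 (m + 1, k)) (-(i:ℤ)) :=
        lineProd_pred _ _
      have h3 := hf m (-(i:ℤ) - 1)
      rw [sub_add_cancel] at h3
      have h4 : U 0 (m, -(i:ℤ) - 1)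
          = (U 1 (m + 1, -(i:ℤ) - 1))⁻¹ * U 0 (m, -(i:ℤ)) * U 1 (m, -(i:ℤ) - 1) := by
        rw [h3]; group
      rw [h1, h2, h4]
      calc (U 1 (m + 1, -(i:ℤ) - 1))⁻¹ * U 0 (m, -(i:ℤ)) * U 1 (m, -(i:ℤ) - 1) *
            ((U 1 (m, -(i:ℤ) - 1))⁻¹ * lineProd (fun k => U 1 (m, k)) (-(i:ℤ)))
          = (U 1 (m + 1, -(i:ℤ) - 1))⁻¹ *
            (U 0 (m, -(i:ℤ)) * lineProd (fun k => U 1 (m, k)) (-(i:ℤ))) := by group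
        _ = (U 1 (m + 1, -(i:ℤ) - 1))⁻¹ *
            (lineProd (fun k => U 1 (m + 1, k)) (-(i:ℤ)) * U 0 (m, 0)) := by rw [ih]
        _ = _ := by group

include hf in
lemma gpot_step0 (m n : ℤ) :
    gpot U (m + 1, n) = U 0 (m, n) * gpot U (m, n) := by
  simp only [gpot]
  have hrow : lineProd (fun k => U 0 (k, 0)) (m + 1)
      = U 0 (m, 0) * lineProd (fun k => U 0 (k, 0)) m := lineProd_succ _ _
  rw [hrow, ← mul_assoc, ← key_col U hf m n]
  group

lemma gpot_step1 (m n : ℤ) :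
    gpot U (m, n + 1) = U 1 (m, n) * gpot U (m, n) := by
  simp only [gpot]
  rw [lineProd_succ]
  group

end Gpot

/-- A pure-gauge Wilson line only depends on the endpoints. -/
lemma wline_of_gauge {Vt : Type*} [AddGroup Vt] (e : Fin 2 → Vt)
    (U : Fin 2 → Vt → G) (g : Vt → G)
    (h : ∀ μ z, U μ z = g (z + e μ) * (g z)⁻¹) :
    ∀ (γ : List (Fin 2 × Bool)) (x : Vt),
      wline e U x γ = g (pathEnd e x γ) * (g x)⁻¹ := by
  intro γ
  induction γ with
  | nil => intro x; simp [wline, pathEnd]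
  | cons s γ ih =>
      obtain ⟨μ, b⟩ := s
      intro x
      cases b with
      | true =>
          show wline e U (x + e μ) γ * U μ x = g (pathEnd e (x + e μ) γ) * (g x)⁻¹
          rw [ih, h μ x]; group
      | false =>
          show wline e U (x - e μ) γ * (U μ (x - e μ))⁻¹
              = g (pathEnd e (x - e μ) γ) * (g x)⁻¹
          rw [ih, h μ (x - e μ), sub_add_cancel]; group

/-- Pulling back a Wilson line along an additive covering map. -/
lemma wline_pullback {Vt Wt : Type*} [AddGroup Vt] [AddGroup Wt]
    (e : Fin 2 → Vt) (f : Fin 2 → Wt) (π : Wt → Vt)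
    (hπ : ∀ μ z, π (z + f μ) = π z + e μ) (hπ' : ∀ μ z, π (z - f μ) = π z - e μ)
    (U : Fin 2 → Vt → G) :
    ∀ (γ : List (Fin 2 × Bool)) (x : Wt),
      wline f (fun μ z => U μ (π z)) x γ = wline e U (π x) γ := by
  intro γ
  induction γ with
  | nil => intro x; rfl
  | cons s γ ih =>
      obtain ⟨μ, b⟩ := s
      intro x
      cases b with
      | true =>
          show wline f (fun μ z => U μ (π z)) (x + f μ) γ * U μ (π x)
              = wline e U (π x + e μ) γ * U μ (π x)
          rw [ih, hπ]
      | false =>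
          show wline f (fun μ z => U μ (π z)) (x - f μ) γ * (U μ (π (x - f μ)))⁻¹
              = wline e U (π x - e μ) γ * (U μ (π x - e μ))⁻¹
          rw [ih, hπ']

/-- Endpoint on `ℤ × ℤ` in terms of winding numbers. -/
lemma pathEnd_int (γ : List (Fin 2 × Bool)) :
    ∀ x : ℤ × ℤ, pathEnd (![((1:ℤ), (0:ℤ)), (0, 1)]) x γ
      = (x.1 + wind 0 γ, x.2 + wind 1 γ) := by
  induction γ with
  | nil => intro x; simp [pathEnd, wind]
  | cons s γ ih =>
      obtain ⟨μ, b⟩ := s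
      intro x
      fin_cases μ <;> cases b <;>
        simp only [pathEnd, if_true, if_false, Bool.false_eq_true, ih, wind,
          List.count_cons] <;>
        · refine Prod.ext ?_ ?_ <;>
            simp [Matrix.cons_val_zero, Matrix.cons_val_one, Matrix.head_cons,
              Prod.ext_iff] <;> push_cast <;> ring_nf <;> omega

end Aux

/-- On the N×N periodic lattice, if the gauge field has trivial
plaquette holonomy everywhere, then two Wilson lines starting at the same base
point, with the same endpoint and the same homology class (the same signed
winding numbers around the torus), are equal as group elements. -/
theorem wilson_lines_equal_of_same_homology {G : Type*} [Group G] {N : ℕ}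
    (e : Fin 2 → ZMod N × ZMod N) (he : e = ![(1, 0), (0, 1)])
    (U : Fin 2 → ZMod N × ZMod N → G)
    (hflat : ∀ p : ZMod N × ZMod N, plaq e U p = 1)
    (x : ZMod N × ZMod N) (γ₁ γ₂ : List (Fin 2 × Bool))
    (hend : pathEnd e x γ₁ = pathEnd e x γ₂)
    (hwind : ∀ μ : Fin 2, wind μ γ₁ = wind μ γ₂) :
    wline e U x γ₁ = wline e U x γ₂ := by
  subst he
  set ef : Fin 2 → ℤ × ℤ := ![((1:ℤ), (0:ℤ)), (0, 1)] with hef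
  set π : ℤ × ℤ → ZMod N × ZMod N := fun z => ((z.1 : ZMod N), (z.2 : ZMod N)) with hπdef
  have hπ : ∀ (μ : Fin 2) (z : ℤ × ℤ),
      π (z + ef μ) = π z + (![(1, 0), (0, 1)] : Fin 2 → ZMod N × ZMod N) μ := by
    intro μ z
    obtain ⟨zm, zn⟩ := z
    fin_cases μ
    · show (((zm + 1 : ℤ) : ZMod N), ((zn + 0 : ℤ) : ZMod N))
        = (((zm : ℤ) : ZMod N) + 1, ((zn : ℤ) : ZMod N) + 0)
      refine Prod.ext ?_ ?_ <;> push_cast <;> ring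
    · show (((zm + 0 : ℤ) : ZMod N), ((zn + 1 : ℤ) : ZMod N))
        = (((zm : ℤ) : ZMod N) + 0, ((zn : ℤ) : ZMod N) + 1)
      refine Prod.ext ?_ ?_ <;> push_cast <;> ring
  have hπ' : ∀ (μ : Fin 2) (z : ℤ × ℤ),
      π (z - ef μ) = π z - (![(1, 0), (0, 1)] : Fin 2 → ZMod N × ZMod N) μ := by
    intro μ z
    obtain ⟨zm, zn⟩ := z
    fin_cases μ
    · show (((zm - 1 : ℤ) : ZMod N), ((zn - 0 : ℤ) : ZMod N))
        = (((zm : ℤ) : ZMod N) - 1, ((zn : ℤ) : ZMod N) - 0)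
      refine Prod.ext ?_ ?_ <;> push_cast <;> ring
    · show (((zm - 0 : ℤ) : ZMod N), ((zn - 1 : ℤ) : ZMod N))
        = (((zm : ℤ) : ZMod N) - 0, ((zn : ℤ) : ZMod N) - 1)
      refine Prod.ext ?_ ?_ <;> push_cast <;> ring
  set Ut : Fin 2 → ℤ × ℤ → G := fun μ z => U μ (π z) with hUt
  -- flatness on ℤ × ℤ
  have hf : ∀ m n : ℤ, Ut 0 (m, n + 1) = Ut 1 (m + 1, n) * Ut 0 (m, n) * (Ut 1 (m, n))⁻¹ := by
    intro m n
    have h := hflat (π (m, n))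
    unfold plaq at h
    have e1 : π (m, n) + (![(1, 0), (0, 1)] : Fin 2 → ZMod N × ZMod N) 1 = π (m, n + 1) := by
      rw [← hπ 1 (m, n)]
      congr 1
      show ((m + 0, n + 1) : ℤ × ℤ) = (m, n + 1)
      refine Prod.ext ?_ ?_ <;> dsimp <;> ring
    have e0 : π (m, n) + (![(1, 0), (0, 1)] : Fin 2 → ZMod N × ZMod N) 0 = π (m + 1, n) := by
      rw [← hπ 0 (m, n)]
      congr 1
      show ((m + 1, n + 0) : ℤ × ℤ) = (m + 1, n)
      refine Prod.ext ?_ ?_ <;> dsimp <;> ring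
    rw [e1, e0] at h
    -- h : (U 1 pt)⁻¹ * (U 0 up)⁻¹ * (U 1 right) * (U 0 pt) = 1
    have h1 : (U 1 (π (m, n)))⁻¹ * (U 0 (π (m, n + 1)))⁻¹ *
        (U 1 (π (m + 1, n)) * U 0 (π (m, n))) = 1 := by
      rw [← h]; group
    have h4 : U 1 (π (m + 1, n)) * U 0 (π (m, n))
        = U 0 (π (m, n + 1)) * U 1 (π (m, n)) := by
      have h5 := congrArg (fun g => U 0 (π (m, n + 1)) * (U 1 (π (m, n)) * g)) h1
      simp only [mul_one] at h5
      rw [← h5]; group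
    show U 0 (π (m, n + 1)) = U 1 (π (m + 1, n)) * U 0 (π (m, n)) * (U 1 (π (m, n)))⁻¹
    rw [h4]; group
  -- pure gauge
  have hg0 : ∀ m n : ℤ, Ut 0 (m, n) = gpot Ut ((m, n) + ef 0) * (gpot Ut (m, n))⁻¹ := by
    intro m n
    have hz : ((m, n) : ℤ × ℤ) + ef 0 = (m + 1, n) := by
      show ((m + 1, n + 0) : ℤ × ℤ) = (m + 1, n)
      refine Prod.ext ?_ ?_ <;> dsimp <;> ring
    rw [hz, gpot_step0 Ut hf m n]; group
  have hg1 : ∀ m n : ℤ, Ut 1 (m, n) = gpot Ut ((m, n) + ef 1) * (gpot Ut (m, n))⁻¹ := by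
    intro m n
    have hz : ((m, n) : ℤ × ℤ) + ef 1 = (m, n + 1) := by
      show ((m + 0, n + 1) : ℤ × ℤ) = (m, n + 1)
      refine Prod.ext ?_ ?_ <;> dsimp <;> ring
    rw [hz, gpot_step1 Ut m n]; group
  have hgauge : ∀ (μ : Fin 2) (z : ℤ × ℤ),
      Ut μ z = gpot Ut (z + ef μ) * (gpot Ut z)⁻¹ := by
    intro μ z
    obtain ⟨m, n⟩ := z
    fin_cases μ
    · exact hg0 m n
    · exact hg1 m n
  -- lift the base point
  obtain ⟨a, b⟩ := x
  set xt : ℤ × ℤ := ((ZMod.cast a : ℤ), (ZMod.cast b : ℤ)) with hxt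
  have hx : π xt = (a, b) := by
    simp [hπdef, hxt, ZMod.intCast_zmod_cast]
  have key : ∀ γ : List (Fin 2 × Bool),
      wline (![(1, 0), (0, 1)] : Fin 2 → ZMod N × ZMod N) U (a, b) γ
        = gpot Ut (xt.1 + wind 0 γ, xt.2 + wind 1 γ) * (gpot Ut xt)⁻¹ := by
    intro γ
    rw [← hx, ← wline_pullback _ ef π hπ hπ' U γ xt]
    rw [show (fun μ z => U μ (π z)) = Ut from rfl]
    rw [wline_of_gauge ef Ut (gpot Ut) hgauge γ xt]
    rw [show pathEnd ef xt γ = (xt.1 + wind 0 γ, xt.2 + wind 1 γ) from pathEnd_int γ xt]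
  rw [key γ₁, key γ₂, hwind 0, hwind 1]
end

section
/- On an N×N periodic square lattice with a gauge field of trivial plaquette holonomy, the two fundamental Wilson loops w₁ and w₂ based at the same vertex, winding once around the two independent cycles of the torus, commute: w₁ w₂ = w₂ w₁. -/
/-- Unfolding one positively-oriented step of a Wilson line. -/
lemma wline_step {G Vt : Type*} [Group G] [AddGroup Vt] (e : Fin 2 → Vt)
    (U : Fin 2 → Vt → G) (x : Vt) (μ : Fin 2) (γ : List (Fin 2 × Bool)) :
    wline e U x ((μ, true) :: γ) = wline e U (x + e μ) γ * U μ x := by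
  simp [wline]

/-- Parallel transport of the vertical edge along a horizontal line, given
the flatness relation. -/
lemma wilson_aux1 {G Vt : Type*} [Group G] [AddCommGroup Vt] (e : Fin 2 → Vt)
    (U : Fin 2 → Vt → G)
    (key : ∀ x, U 1 (x + e 0) * U 0 x = U 0 (x + e 1) * U 1 x) :
    ∀ (k : ℕ) (x : Vt),
      U 1 (x + k • e 0) * wline e U x (List.replicate k ((0 : Fin 2), true)) =
        wline e U (x + e 1) (List.replicate k ((0 : Fin 2), true)) * U 1 x := by
  intro k
  induction k with
  | zero => intro x; simp [wline]
  | succ k ih =>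
    intro x
    have hx : x + (k + 1) • e 0 = (x + e 0) + k • e 0 := by
      rw [succ_nsmul]; abel
    rw [List.replicate_succ, wline_step, wline_step, hx, ← mul_assoc, ih (x + e 0),
      mul_assoc, key x, show x + e 0 + e 1 = x + e 1 + e 0 by abel, ← mul_assoc]

/-- The full horizontal loop is conjugated by vertical Wilson lines. -/
lemma wilson_aux2 {G Vt : Type*} [Group G] [AddCommGroup Vt] (e : Fin 2 → Vt)
    (U : Fin 2 → Vt → G) (N : ℕ) (hwrap : N • e 0 = 0)
    (key : ∀ x, U 1 (x + e 0) * U 0 x = U 0 (x + e 1) * U 1 x) :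
    ∀ (m : ℕ) (x : Vt),
      wline e U (x + m • e 1) (List.replicate N ((0 : Fin 2), true)) *
          wline e U x (List.replicate m ((1 : Fin 2), true)) =
        wline e U x (List.replicate m ((1 : Fin 2), true)) *
          wline e U x (List.replicate N ((0 : Fin 2), true)) := by
  have conj : ∀ x : Vt,
      U 1 x * wline e U x (List.replicate N ((0 : Fin 2), true)) =
        wline e U (x + e 1) (List.replicate N ((0 : Fin 2), true)) * U 1 x := by
    intro x
    have := wilson_aux1 e U key N x
    rwa [hwrap, add_zero] at this
  intro m
  induction m with
  | zero => intro x; simp [wline]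
  | succ m ih =>
    intro x
    have hx : x + (m + 1) • e 1 = (x + e 1) + m • e 1 := by
      rw [succ_nsmul]; abel
    rw [List.replicate_succ, wline_step, hx, ← mul_assoc, ih (x + e 1),
      mul_assoc, ← conj x, ← mul_assoc]

/-- On the N×N periodic lattice with a gauge field of trivial
plaquette holonomy, the two fundamental Wilson loops `w₁` and `w₂`, based at the
same vertex and winding once around the two independent cycles of the torus,
commute. -/
theorem fundamental_wilson_loops_commute {G : Type*} [Group G] {N : ℕ}
    (hN : 0 < N)
    (e : Fin 2 → ZMod N × ZMod N) (he : e = ![(1, 0), (0, 1)])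
    (U : Fin 2 → ZMod N × ZMod N → G)
    (hflat : ∀ p : ZMod N × ZMod N, plaq e U p = 1) :
    wline e U 0 (List.replicate N ((0 : Fin 2), true)) *
        wline e U 0 (List.replicate N ((1 : Fin 2), true)) =
      wline e U 0 (List.replicate N ((1 : Fin 2), true)) *
        wline e U 0 (List.replicate N ((0 : Fin 2), true)) := by
  have key : ∀ x, U 1 (x + e 0) * U 0 x = U 0 (x + e 1) * U 1 x := by
    intro x
    have h := hflat x
    unfold plaq at h
    have h2 := congrArg (fun g => U 0 (x + e 1) * (U 1 x * g)) h
    simpa [mul_assoc] using h2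
  have he0 : e 0 = ((1 : ZMod N), (0 : ZMod N)) := by rw [he]; rfl
  have he1 : e 1 = ((0 : ZMod N), (1 : ZMod N)) := by rw [he]; rfl
  have hwrap0 : N • e 0 = 0 := by
    rw [he0]
    refine Prod.ext ?_ ?_ <;> simp [nsmul_eq_mul, ZMod.natCast_self]
  have hwrap1 : N • e 1 = 0 := by
    rw [he1]
    refine Prod.ext ?_ ?_ <;> simp [nsmul_eq_mul, ZMod.natCast_self]
  have := wilson_aux2 e U N hwrap0 key N 0
  rwa [hwrap1, add_zero] at this
end

section
/- The space of zero-field-strength gauge configurations on an N×N periodic lattice is parameterized by 𝕌₀[G] ≅ S(G) × G^{N²-1}, where S(G) = {(g₁, g₂) ∈ G × G : g₁g₂ = g₂g₁}. Concretely: the map sending a function ω : vertices of the N×N torus lattice lifted to ℤ² (with ω(0,0) = 1, satisfying the periodicity constraints ω(N,i)ω(N,0)⁻¹ = ω(0,i), ω(i,N)ω(0,N)⁻¹ = ω(i,0) for 1 ≤ i ≤ N-1, and ω(N,N) = ω(N,0)ω(0,N) = ω(0,N)ω(N,0)) to the pure-gauge field U_μ(x) = ω(x+μ̂)ω(x)⁻¹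 gives a bijection between such functions and zero-field-strength gauge configurations on the periodic lattice; the free data are the commuting pair (ω(N,0), ω(0,N)) ∈ S(G) and the N²-1 unconstrained values ω(x,y) for (x,y) ≠ (0,0) in the fundamental domain. -/
/-- The vertex `(a.val : Fin (N+1))` of the fundamental domain `[0,N]²` of the
`ℤ²`-lift of the discrete torus, corresponding to `a : ZMod N`. -/
def vtx {N : ℕ} [NeZero N] (a : ZMod N) : Fin (N + 1) :=
  ⟨a.val, Nat.lt_succ_of_lt (ZMod.val_lt a)⟩

/-- The shifted vertex `a.val + 1 : Fin (N+1)` (one step in the positive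
direction, inside the fundamental domain, without wrapping around). -/
def vtxS {N : ℕ} [NeZero N] (a : ZMod N) : Fin (N + 1) :=
  ⟨a.val + 1, Nat.succ_lt_succ (ZMod.val_lt a)⟩

/-- The pure-gauge field `U_μ(x) = ω(x + μ̂) ω(x)⁻¹` on the N×N periodic lattice
determined by a function `ω` on the fundamental domain `[0,N]²`. -/
def gaugeOfOmega {G : Type*} [Group G] {N : ℕ} [NeZero N]
    (ω : Fin (N + 1) × Fin (N + 1) → G) : Fin 2 → ZMod N × ZMod N → G :=
  fun μ x =>
    if μ = 0 then ω (vtxS x.1, vtx x.2) * (ω (vtx x.1, vtx x.2))⁻¹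
    else ω (vtx x.1, vtxS x.2) * (ω (vtx x.1, vtx x.2))⁻¹

/-- The set of functions `ω` on the fundamental domain `[0,N]²` normalized by
`ω(0,0) = 1` and satisfying the periodicity constraints
`ω(N,i) ω(N,0)⁻¹ = ω(0,i)`, `ω(i,N) ω(0,N)⁻¹ = ω(i,0)` for `1 ≤ i ≤ N-1`, and
`ω(N,N) = ω(N,0) ω(0,N) = ω(0,N) ω(N,0)`. -/
def omegaSet (G : Type*) [Group G] (N : ℕ) :
    Set ((Fin (N + 1) × Fin (N + 1)) → G) :=
  {ω | ω (0, 0) = 1 ∧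
    (∀ i : Fin (N + 1), 1 ≤ (i : ℕ) → (i : ℕ) ≤ N - 1 →
      ω (Fin.last N, i) * (ω (Fin.last N, 0))⁻¹ = ω (0, i) ∧
      ω (i, Fin.last N) * (ω (0, Fin.last N))⁻¹ = ω (i, 0)) ∧
    ω (Fin.last N, Fin.last N) = ω (Fin.last N, 0) * ω (0, Fin.last N) ∧
    ω (Fin.last N, 0) * ω (0, Fin.last N) = ω (0, Fin.last N) * ω (Fin.last N, 0)}

/-- The free data carried by such an `ω`: the commuting pair
`(ω(N,0), ω(0,N)) ∈ S(G)` and the `N² - 1` unconstrained values `ω(x,y)` for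
`(x,y) ≠ (0,0)` in the fundamental domain. -/
def omegaData {G : Type*} [Group G] {N : ℕ} [NeZero N]
    (ω : (Fin (N + 1) × Fin (N + 1)) → G) :
    (G × G) × (({v : Fin N × Fin N // v ≠ (0, 0)}) → G) :=
  ((ω (Fin.last N, 0), ω (0, Fin.last N)),
    fun v => ω (Fin.castSucc v.1.1, Fin.castSucc v.1.2))

namespace FlatAux
set_option linter.unusedSectionVars false

variable {G : Type*} [Group G] {N : ℕ} [NeZero N]

lemma cast_val (a : ZMod N) : ((a.val : ℕ) : ZMod N) = a := ZMod.natCast_rightInverse a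

lemma vtx_natCast {i : ℕ} (hi : i < N) : vtx ((i : ZMod N)) = ⟨i, by omega⟩ := by
  simp [vtx, ZMod.val_natCast_of_lt hi]

lemma vtxS_natCast {i : ℕ} (hi : i < N) : vtxS ((i : ZMod N)) = ⟨i + 1, by omega⟩ := by
  simp [vtxS, ZMod.val_natCast_of_lt hi]

lemma vtx_zero : vtx (0 : ZMod N) = 0 := by
  apply Fin.ext; simp [vtx]

lemma hA {ω : (Fin (N+1) × Fin (N+1)) → G} (hω : ω ∈ omegaSet G N) (j : Fin (N+1)) :
    ω (Fin.last N, j) = ω (0, j) * ω (Fin.last N, 0) := by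
  obtain ⟨h0, hper, hNN, hcom⟩ := hω
  rcases j.eq_castSucc_or_eq_last with ⟨b, rfl⟩ | rfl
  · by_cases hb : b = 0
    · subst hb
      rw [Fin.castSucc_zero', h0, one_mul]
    · have h1 : 1 ≤ ((b.castSucc : Fin (N+1)) : ℕ) := by
        have : b.val ≠ 0 := fun h => hb (Fin.ext h)
        simp only [Fin.coe_castSucc]; omega
      have h2 : ((b.castSucc : Fin (N+1)) : ℕ) ≤ N - 1 := by
        have := b.isLt; simp only [Fin.coe_castSucc]; omega
      have := (hper b.castSucc h1 h2).1
      rw [← this, inv_mul_cancel_right]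
  · rw [hNN, hcom]

lemma hB {ω : (Fin (N+1) × Fin (N+1)) → G} (hω : ω ∈ omegaSet G N) (i : Fin (N+1)) :
    ω (i, Fin.last N) = ω (i, 0) * ω (0, Fin.last N) := by
  obtain ⟨h0, hper, hNN, hcom⟩ := hω
  rcases i.eq_castSucc_or_eq_last with ⟨b, rfl⟩ | rfl
  · by_cases hb : b = 0
    · subst hb
      rw [Fin.castSucc_zero', h0, one_mul]
    · have h1 : 1 ≤ ((b.castSucc : Fin (N+1)) : ℕ) := by
        have : b.val ≠ 0 := fun h => hb (Fin.ext h)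
        simp only [Fin.coe_castSucc]; omega
      have h2 : ((b.castSucc : Fin (N+1)) : ℕ) ≤ N - 1 := by
        have := b.isLt; simp only [Fin.coe_castSucc]; omega
      have := (hper b.castSucc h1 h2).2
      rw [← this, inv_mul_cancel_right]
  · exact hNN

/-- Horizontal Wilson line along the bottom row. -/
def Hf (U : Fin 2 → ZMod N × ZMod N → G) : ℕ → G
  | 0 => 1
  | i + 1 => U 0 (((i : ℕ) : ZMod N), 0) * Hf U i

/-- Wilson line: right `i` steps along the bottom, then up `j` steps. -/
def hf (U : Fin 2 → ZMod N × ZMod N → G) (i : ℕ) : ℕ → G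
  | 0 => Hf U i
  | j + 1 => U 1 (((i : ℕ) : ZMod N), ((j : ℕ) : ZMod N)) * hf U i j

lemma hf_zero (U : Fin 2 → ZMod N × ZMod N → G) (i : ℕ) : hf U i 0 = Hf U i := rfl

lemma hf_succ (U : Fin 2 → ZMod N × ZMod N → G) (i j : ℕ) :
    hf U i (j + 1) = U 1 (((i : ℕ) : ZMod N), ((j : ℕ) : ZMod N)) * hf U i j := rfl

lemma Hf_succ (U : Fin 2 → ZMod N × ZMod N → G) (i : ℕ) :
    Hf U (i + 1) = U 0 (((i : ℕ) : ZMod N), 0) * Hf U i := rfl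

lemma hf_sub (U : Fin 2 → ZMod N × ZMod N → G) {i i' : ℕ}
    (h : (i : ZMod N) = (i' : ZMod N)) (j : ℕ) :
    hf U i j * (hf U i 0)⁻¹ = hf U i' j * (hf U i' 0)⁻¹ := by
  induction j with
  | zero => simp
  | succ j ih => rw [hf_succ, hf_succ, h, mul_assoc, mul_assoc, ih]

lemma hf_step (U : Fin 2 → ZMod N × ZMod N → G)
    (hsq : ∀ a b : ZMod N, U 1 (a + 1, b) * U 0 (a, b) = U 0 (a, b + 1) * U 1 (a, b))
    (i j : ℕ) :
    hf U (i + 1) j = U 0 (((i : ℕ) : ZMod N), ((j : ℕ) : ZMod N)) * hf U i j := by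
  induction j with
  | zero => rw [Nat.cast_zero, hf_zero, hf_zero, Hf_succ]
  | succ j ih =>
    rw [hf_succ, hf_succ, ih, ← mul_assoc, ← mul_assoc]
    congr 1
    have := hsq ((i : ℕ) : ZMod N) ((j : ℕ) : ZMod N)
    push_cast
    push_cast at this
    exact this

lemma hf_top (U : Fin 2 → ZMod N × ZMod N → G)
    (hsq : ∀ a b : ZMod N, U 1 (a + 1, b) * U 0 (a, b) = U 0 (a, b + 1) * U 1 (a, b))
    (i : ℕ) : hf U i N = hf U i 0 * hf U 0 N := by
  induction i with
  | zero => rw [show hf U 0 0 = 1 from rfl, one_mul]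
  | succ i ih =>
    rw [hf_step U hsq, ih, hf_step U hsq, ← mul_assoc]
    congr 3
    simp [ZMod.natCast_self]

lemma hf_wrap (U : Fin 2 → ZMod N × ZMod N → G) (j : ℕ) :
    hf U N j = hf U 0 j * hf U N 0 := by
  have h := hf_sub U (i := N) (i' := 0) (by simp [ZMod.natCast_self]) j
  rw [show hf U 0 0 = 1 from rfl, inv_one, mul_one] at h
  rw [← h, inv_mul_cancel_right]

/-- Reconstruction of `ω` from a gauge configuration. -/
def recon (U : Fin 2 → ZMod N × ZMod N → G) : (Fin (N + 1) × Fin (N + 1)) → G :=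
  fun p => hf U p.1.val p.2.val


lemma recon_mem (U : Fin 2 → ZMod N × ZMod N → G)
    (hsq : ∀ a b : ZMod N, U 1 (a + 1, b) * U 0 (a, b) = U 0 (a, b + 1) * U 1 (a, b)) :
    recon U ∈ omegaSet G N := by
  refine ⟨rfl, ?_, ?_, ?_⟩
  · intro i h1 h2
    constructor
    · show hf U (Fin.last N).val i.val * (hf U (Fin.last N).val (0 : Fin (N+1)).val)⁻¹
        = hf U (0 : Fin (N+1)).val i.val
      rw [Fin.val_last, Fin.val_zero, hf_wrap, mul_inv_cancel_right]
    · show hf U i.val (Fin.last N).val * (hf U (0 : Fin (N+1)).val (Fin.last N).val)⁻¹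
        = hf U i.val (0 : Fin (N+1)).val
      rw [Fin.val_last, Fin.val_zero, hf_top U hsq, mul_inv_cancel_right]
  · show hf U (Fin.last N).val (Fin.last N).val
      = hf U (Fin.last N).val (0 : Fin (N+1)).val * hf U (0 : Fin (N+1)).val (Fin.last N).val
    rw [Fin.val_last, Fin.val_zero]
    exact hf_top U hsq N
  · show hf U (Fin.last N).val (0 : Fin (N+1)).val * hf U (0 : Fin (N+1)).val (Fin.last N).val
      = hf U (0 : Fin (N+1)).val (Fin.last N).val * hf U (Fin.last N).val (0 : Fin (N+1)).val
    rw [Fin.val_last, Fin.val_zero, ← hf_top U hsq N, hf_wrap]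

lemma gauge_recon (U : Fin 2 → ZMod N × ZMod N → G)
    (hsq : ∀ a b : ZMod N, U 1 (a + 1, b) * U 0 (a, b) = U 0 (a, b + 1) * U 1 (a, b)) :
    gaugeOfOmega (recon U) = U := by
  funext μ x
  fin_cases μ
  · show (if (0 : Fin 2) = 0 then _ else _) = U 0 x
    rw [if_pos rfl]
    show hf U (x.1.val + 1) x.2.val * (hf U x.1.val x.2.val)⁻¹ = U 0 x
    rw [hf_step U hsq, mul_inv_cancel_right, cast_val, cast_val]
  · show (if (1 : Fin 2) = 0 then _ else _) = U 1 x
    rw [if_neg (by decide)]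
    show hf U x.1.val (x.2.val + 1) * (hf U x.1.val x.2.val)⁻¹ = U 1 x
    rw [hf_succ, mul_inv_cancel_right, cast_val, cast_val]

lemma recon_gauge {ω : (Fin (N+1) × Fin (N+1)) → G} (hω : ω ∈ omegaSet G N) :
    recon (gaugeOfOmega ω) = ω := by
  set U := gaugeOfOmega ω with hU
  have hH : ∀ i : ℕ, ∀ hi : i ≤ N, Hf U i = ω (⟨i, by omega⟩, 0) := by
    intro i
    induction i with
    | zero => intro _; rw [Fin.mk_zero]; exact hω.1.symm
    | succ i ih =>
      intro hi
      rw [Hf_succ, ih (by omega)]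
      show gaugeOfOmega ω 0 (((i : ℕ) : ZMod N), 0) * _ = _
      rw [gaugeOfOmega, if_pos rfl]
      simp only [vtx_natCast (show i < N by omega), vtxS_natCast (show i < N by omega), vtx_zero]
      rw [inv_mul_cancel_right]
  have hfin : ∀ i : ℕ, ∀ hi : i < N, ∀ j : ℕ, ∀ hj : j ≤ N,
      hf U i j = ω (⟨i, by omega⟩, ⟨j, by omega⟩) := by
    intro i hi j
    induction j with
    | zero => intro _; rw [hf_zero, hH i (by omega), Fin.mk_zero]
    | succ j ih =>
      intro hj
      rw [hf_succ, ih (by omega)]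
      show gaugeOfOmega ω 1 (((i : ℕ) : ZMod N), ((j : ℕ) : ZMod N)) * _ = _
      rw [gaugeOfOmega, if_neg (by decide)]
      simp only [vtx_natCast (show i < N by omega), vtx_natCast (show j < N by omega),
        vtxS_natCast (show j < N by omega)]
      rw [inv_mul_cancel_right]
  have hlastrow : ∀ j : ℕ, ∀ hj : j ≤ N, hf U N j = ω (Fin.last N, ⟨j, by omega⟩) := by
    intro j hj
    have hNpos : 0 < N := Nat.pos_of_ne_zero (NeZero.ne N)
    rw [hf_wrap, hf_zero, hH N le_rfl, hfin 0 hNpos j hj, Fin.mk_zero,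
      show (⟨N, by omega⟩ : Fin (N+1)) = Fin.last N from Fin.ext rfl,
      hA hω ⟨j, by omega⟩]
  funext p
  obtain ⟨i, j⟩ := p
  show hf U i.val j.val = ω (i, j)
  rcases Nat.lt_or_ge i.val N with hi | hi
  · rw [hfin i.val hi j.val (Nat.lt_succ_iff.mp j.isLt)]
    try exact congrArg ω (Prod.ext (Fin.ext rfl) (Fin.ext rfl))
  · have hiN : i.val = N := by have := i.isLt; omega
    rw [hiN, hlastrow j.val (Nat.lt_succ_iff.mp j.isLt)]
    try exact congrArg ω (Prod.ext (Fin.ext hiN.symm) (Fin.ext rfl))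

lemma claim0 {ω : (Fin (N+1) × Fin (N+1)) → G} (hω : ω ∈ omegaSet G N) (a : ZMod N)
    (j : Fin (N+1)) :
    ω (vtxS a, j)
      = ω (vtx (a + 1), j) * (if a.val + 1 = N then ω (Fin.last N, 0) else 1) := by
  by_cases h : a.val + 1 = N
  · rw [if_pos h]
    have h1 : vtxS a = Fin.last N := Fin.ext (by simp [vtxS, h])
    have h2 : a + 1 = 0 := by
      conv_lhs => rw [← cast_val a]
      rw [← Nat.cast_add_one, h, ZMod.natCast_self]
    rw [h1, h2, vtx_zero, hA hω]
  · rw [if_neg h, mul_one]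
    have hlt : a.val + 1 < N := by have := ZMod.val_lt a; omega
    have hv : vtx (a + 1) = vtxS a := by
      conv_lhs => rw [← cast_val a, ← Nat.cast_add_one, vtx_natCast hlt]
      exact Fin.ext rfl
    rw [hv]

lemma claim1 {ω : (Fin (N+1) × Fin (N+1)) → G} (hω : ω ∈ omegaSet G N) (b : ZMod N)
    (i : Fin (N+1)) :
    ω (i, vtxS b)
      = ω (i, vtx (b + 1)) * (if b.val + 1 = N then ω (0, Fin.last N) else 1) := by
  by_cases h : b.val + 1 = N
  · rw [if_pos h]
    have h1 : vtxS b = Fin.last N := Fin.ext (by simp [vtxS, h])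
    have h2 : b + 1 = 0 := by
      conv_lhs => rw [← cast_val b]
      rw [← Nat.cast_add_one, h, ZMod.natCast_self]
    rw [h1, h2, vtx_zero, hB hω]
  · rw [if_neg h, mul_one]
    have hlt : b.val + 1 < N := by have := ZMod.val_lt b; omega
    have hv : vtx (b + 1) = vtxS b := by
      conv_lhs => rw [← cast_val b, ← Nat.cast_add_one, vtx_natCast hlt]
      exact Fin.ext rfl
    rw [hv]

lemma key_quad {A B D E c0 c1 : G} (h : c0 * c1 = c1 * c0) :
    (D * c1 * A⁻¹)⁻¹ * (E * c0 * D⁻¹)⁻¹ * (E * c1 * B⁻¹) * (B * c0 * A⁻¹) = 1 := by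
  have h2 : ∀ X : G, c0⁻¹ * (c1 * (c0 * X)) = c1 * X := by
    intro X; rw [← mul_assoc c1 c0 X, ← h, mul_assoc c0 c1 X, inv_mul_cancel_left]
  simp [mul_inv_rev, mul_assoc, h2]

lemma gauge_flat {ω : (Fin (N+1) × Fin (N+1)) → G} (hω : ω ∈ omegaSet G N)
    (a b : ZMod N) :
    (gaugeOfOmega ω 1 (a, b))⁻¹ * (gaugeOfOmega ω 0 (a, b + 1))⁻¹
      * gaugeOfOmega ω 1 (a + 1, b) * gaugeOfOmega ω 0 (a, b) = 1 := by
  have e0 : ∀ p q : ZMod N, gaugeOfOmega ω 0 (p, q)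
      = ω (vtx (p + 1), vtx q) * (if p.val + 1 = N then ω (Fin.last N, 0) else 1)
        * (ω (vtx p, vtx q))⁻¹ := by
    intro p q
    rw [gaugeOfOmega, if_pos rfl]
    exact congrArg (· * (ω (vtx p, vtx q))⁻¹) (claim0 hω p (vtx q))
  have e1 : ∀ p q : ZMod N, gaugeOfOmega ω 1 (p, q)
      = ω (vtx p, vtx (q + 1)) * (if q.val + 1 = N then ω (0, Fin.last N) else 1)
        * (ω (vtx p, vtx q))⁻¹ := by
    intro p q
    rw [gaugeOfOmega, if_neg (by decide)]
    exact congrArg (· * (ω (vtx p, vtx q))⁻¹) (claim1 hω q (vtx p))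
  rw [e0, e0, e1, e1]
  apply key_quad
  by_cases h0 : a.val + 1 = N <;> by_cases h1 : b.val + 1 = N <;>
    simp [h0, h1, hω.2.2.2]

def baseF (f : {v : Fin N × Fin N // v ≠ (0, 0)} → G) : Fin N × Fin N → G :=
  fun v => if h : v = (0, 0) then 1 else f ⟨v, h⟩

def buildOmega (g₁ g₂ : G) (f : {v : Fin N × Fin N // v ≠ (0, 0)} → G) :
    (Fin (N + 1) × Fin (N + 1)) → G :=
  fun p =>
    Fin.lastCases
      (Fin.lastCases (g₁ * g₂) (fun b => baseF f (0, b) * g₁) p.2)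
      (fun a => Fin.lastCases (baseF f (a, 0) * g₂) (fun b => baseF f (a, b)) p.2)
      p.1

variable (g₁ g₂ : G) (f : {v : Fin N × Fin N // v ≠ (0, 0)} → G)

lemma bo_cc (a b : Fin N) :
    buildOmega g₁ g₂ f (Fin.castSucc a, Fin.castSucc b) = baseF f (a, b) := by
  simp [buildOmega]

lemma bo_lc (b : Fin N) :
    buildOmega g₁ g₂ f (Fin.last N, Fin.castSucc b) = baseF f (0, b) * g₁ := by
  simp [buildOmega]

lemma bo_cl (a : Fin N) :
    buildOmega g₁ g₂ f (Fin.castSucc a, Fin.last N) = baseF f (a, 0) * g₂ := by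
  simp [buildOmega]

lemma bo_ll : buildOmega g₁ g₂ f (Fin.last N, Fin.last N) = g₁ * g₂ := by
  simp [buildOmega]

lemma bo_l0 : buildOmega g₁ g₂ f (Fin.last N, 0) = g₁ := by
  rw [← Fin.castSucc_zero', bo_lc, baseF, dif_pos rfl, one_mul]

lemma bo_0l : buildOmega g₁ g₂ f (0, Fin.last N) = g₂ := by
  rw [← Fin.castSucc_zero', bo_cl, baseF, dif_pos rfl, one_mul]

lemma bo_0c (b : Fin N) :
    buildOmega g₁ g₂ f (0, Fin.castSucc b) = baseF f (0, b) := by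
  rw [← Fin.castSucc_zero', bo_cc]

lemma bo_c0 (a : Fin N) :
    buildOmega g₁ g₂ f (Fin.castSucc a, 0) = baseF f (a, 0) := by
  rw [← Fin.castSucc_zero' (n := N), bo_cc]

lemma bo_mem (hcom : g₁ * g₂ = g₂ * g₁) : buildOmega g₁ g₂ f ∈ omegaSet G N := by
  refine ⟨?_, ?_, ?_, ?_⟩
  · rw [show ((0, 0) : Fin (N+1) × Fin (N+1)) = (Fin.castSucc 0, Fin.castSucc 0) by
      rw [Fin.castSucc_zero'], bo_cc, baseF, dif_pos rfl]
  · intro i h1 h2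
    have hiN : i.val < N := by omega
    obtain ⟨b, rfl⟩ : ∃ b : Fin N, i = Fin.castSucc b := by
      rcases i.eq_castSucc_or_eq_last with ⟨b, rfl⟩ | rfl
      · exact ⟨b, rfl⟩
      · simp [Fin.val_last] at hiN
    constructor
    · rw [bo_lc, bo_l0, bo_0c, mul_inv_cancel_right]
    · rw [bo_cl, bo_0l, bo_c0, mul_inv_cancel_right]
  · rw [bo_ll, bo_l0, bo_0l]
  · rw [bo_l0, bo_0l]; exact hcom

lemma bo_data : omegaData (buildOmega g₁ g₂ f) = ((g₁, g₂), f) := by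
  rw [omegaData, bo_l0, bo_0l]
  refine Prod.ext rfl ?_
  funext v
  show buildOmega g₁ g₂ f (Fin.castSucc v.1.1, Fin.castSucc v.1.2) = f v
  rw [bo_cc, baseF, dif_neg (by rw [Prod.mk.eta]; exact v.2)]
  try exact congrArg f (Subtype.ext (Prod.mk.eta))

lemma data_inj {ω₁ ω₂ : (Fin (N+1) × Fin (N+1)) → G} (h₁ : ω₁ ∈ omegaSet G N)
    (h₂ : ω₂ ∈ omegaSet G N) (hd : omegaData ω₁ = omegaData ω₂) : ω₁ = ω₂ := by
  have hd1 : ω₁ (Fin.last N, 0) = ω₂ (Fin.last N, 0) := congrArg (fun q => q.1.1) hd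
  have hd2 : ω₁ (0, Fin.last N) = ω₂ (0, Fin.last N) := congrArg (fun q => q.1.2) hd
  have hd3 : ∀ (v : Fin N × Fin N) (hv : v ≠ (0, 0)),
      ω₁ (Fin.castSucc v.1, Fin.castSucc v.2) = ω₂ (Fin.castSucc v.1, Fin.castSucc v.2) :=
    fun v hv => congrFun (congrArg (fun q => q.2) hd) ⟨v, hv⟩
  have hInt : ∀ a b : Fin N, ω₁ (Fin.castSucc a, Fin.castSucc b)
      = ω₂ (Fin.castSucc a, Fin.castSucc b) := by
    intro a b
    by_cases hab : ((a, b) : Fin N × Fin N) = (0, 0)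
    · rw [Prod.mk.injEq] at hab
      rw [hab.1, hab.2, Fin.castSucc_zero', h₁.1, h₂.1]
    · exact hd3 (a, b) hab
  funext p
  obtain ⟨i, j⟩ := p
  rcases i.eq_castSucc_or_eq_last with ⟨a, rfl⟩ | rfl <;>
    rcases j.eq_castSucc_or_eq_last with ⟨b, rfl⟩ | rfl
  · exact hInt a b
  · rw [hB h₁, hB h₂, hd2]
    congr 1
    rw [← Fin.castSucc_zero' (n := N), hInt]
  · rw [hA h₁, hA h₂, hd1]
    congr 1
    rw [← Fin.castSucc_zero', hInt]
  · rw [h₁.2.2.1, h₂.2.2.1, hd1, hd2]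

lemma quad_inv {x y z w : G} (h : x⁻¹ * y⁻¹ * z * w = 1) : z * w = y * x := by
  have h2 : (x⁻¹ * y⁻¹) * (z * w) = 1 := by rw [← mul_assoc]; exact h
  rw [← inv_eq_of_mul_eq_one_right h2, mul_inv_rev, inv_inv, inv_inv]

end FlatAux

/-- The space of zero-field-strength gauge configurations on
the N×N periodic lattice is `𝕌₀[G] ≅ S(G) × G^{N²-1}`: the map `ω ↦ U` given by
`U_μ(x) = ω(x+μ̂) ω(x)⁻¹` is a bijection from the set of constrained functions
`ω` onto the zero-field-strength configurations, and the map extracting the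
free data—the commuting pair `(ω(N,0), ω(0,N)) ∈ S(G)` together with the
`N² - 1` unconstrained values—is a bijection onto
`S(G) × G^{N²-1}`. -/
theorem flat_configurations_parameterization {G : Type*} [Group G] {N : ℕ} [NeZero N]
    (e : Fin 2 → ZMod N × ZMod N) (he : e = ![(1, 0), (0, 1)]) :
    Set.BijOn (gaugeOfOmega (G := G) (N := N)) (omegaSet G N)
        {U : Fin 2 → ZMod N × ZMod N → G | ∀ x, plaq e U x = 1} ∧
      Set.BijOn (omegaData (G := G) (N := N)) (omegaSet G N)
        {q : (G × G) × (({v : Fin N × Fin N // v ≠ (0, 0)}) → G) |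
          q.1.1 * q.1.2 = q.1.2 * q.1.1} := by
  subst he
  constructor
  · refine ⟨?_, ?_, ?_⟩
    · intro ω hω
      simp only [Set.mem_setOf_eq]
      intro x
      obtain ⟨a, b⟩ := x
      rw [plaq]
      simp only [Matrix.cons_val_zero, Matrix.cons_val_one, Matrix.head_cons,
        Prod.mk_add_mk, add_zero, zero_add]
      exact FlatAux.gauge_flat hω a b
    · intro ω₁ h₁ ω₂ h₂ heq
      rw [← FlatAux.recon_gauge h₁, ← FlatAux.recon_gauge h₂, heq]
    · intro U hU
      simp only [Set.mem_setOf_eq] at hU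
      have hsq : ∀ a b : ZMod N, U 1 (a + 1, b) * U 0 (a, b) = U 0 (a, b + 1) * U 1 (a, b) := by
        intro a b
        have h := hU (a, b)
        rw [plaq] at h
        simp only [Matrix.cons_val_zero, Matrix.cons_val_one, Matrix.head_cons,
          Prod.mk_add_mk, add_zero, zero_add] at h
        exact FlatAux.quad_inv h
      exact ⟨FlatAux.recon U, FlatAux.recon_mem U hsq, FlatAux.gauge_recon U hsq⟩
  · refine ⟨?_, ?_, ?_⟩
    · intro ω hω
      exact hω.2.2.2
    · intro ω₁ h₁ ω₂ h₂ heq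
      exact FlatAux.data_inj h₁ h₂ heq
    · rintro ⟨⟨g₁, g₂⟩, f⟩ hq
      exact ⟨FlatAux.buildOmega g₁ g₂ f, FlatAux.bo_mem g₁ g₂ f hq, FlatAux.bo_data g₁ g₂ f⟩
end
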